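/- Let R be a commutative ring, let a_1,...,a_m and b_1,...,b_n be nilpotent elements of R, and set P̃(t) = 1 + a_1 t + ... + a_m t^m and Q̃(t) = 1 + b_1 t + ... + b_n t^n in R[[t]]; note P̃ is a unit in R[[t]]. Let h ∈ R and suppose there exists a polynomial α ∈ R[u] such that α · (u^m + a_1 u^{m-1} + ... + a_m) = h · (u^n + b_1 u^{n-1} + ... + b_n) in R[u]. Then, writing Q̃ · P̃⁻¹ = Σ_{i≥0} c_i t^i in R[[t]], we have h · c_i = 0 for every i > n − m. -/

import Mathlib

open Polynomial PowerSeries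

private lemma reflect_sum' {R : Type*} [CommRing R] (N : ℕ) {ι : Type*} (s : Finset ι)
    (f : ι → Polynomial R) :
    Polynomial.reflect N (∑ i ∈ s, f i) = ∑ i ∈ s, Polynomial.reflect N (f i) :=
  map_sum (AddMonoidHom.mk' (Polynomial.reflect N) (fun p q => Polynomial.reflect_add p q N)) f s

/-- Corollary 3.2 (algebraic form). Let `a₁,…,aₘ` and `b₁,…,bₙ` be nilpotent,
`P̃(t) = 1 + a₁ t + ⋯ + aₘ tᵐ`, `Q̃(t) = 1 + b₁ t + ⋯ + bₙ tⁿ`.  If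
`α ⬝ (uᵐ + a₁ u^{m-1} + ⋯ + aₘ) = h ⬝ (uⁿ + b₁ u^{n-1} + ⋯ + bₙ)` for some
polynomial `α`, then the coefficients `cᵢ` of `Q̃ ⬝ P̃⁻¹` satisfy `h * cᵢ = 0`
for all `i > n - m`. -/
theorem stmt_1 {R : Type*} [CommRing R] (m n : ℕ)
    (a : Fin m → R) (b : Fin n → R)
    (ha : ∀ i, IsNilpotent (a i)) (hb : ∀ j, IsNilpotent (b j))
    (h : R)
    (hα : ∃ α : Polynomial R,
      α * (Polynomial.X ^ m + ∑ i : Fin m, Polynomial.C (a i) * Polynomial.X ^ (m - 1 - (i : ℕ)))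
        = Polynomial.C h *
          (Polynomial.X ^ n + ∑ j : Fin n, Polynomial.C (b j) * Polynomial.X ^ (n - 1 - (j : ℕ))))
    (S : PowerSeries R)
    -- `S = Q̃ ⬝ P̃⁻¹`, i.e. `P̃ ⬝ S = Q̃`:
    (hS : (1 + ∑ i : Fin m, PowerSeries.C (a i) * PowerSeries.X ^ ((i : ℕ) + 1)) * S
        = 1 + ∑ j : Fin n, PowerSeries.C (b j) * PowerSeries.X ^ ((j : ℕ) + 1)) :
    ∀ i : ℕ, (n : ℤ) - (m : ℤ) < (i : ℤ) → h * PowerSeries.coeff i S = 0 := by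
  rcases subsingleton_or_nontrivial R with hR | hR
  · intro i _; exact Subsingleton.elim _ _
  obtain ⟨α, hαeq⟩ := hα
  set P : R[X] := Polynomial.X ^ m + ∑ i : Fin m, Polynomial.C (a i) * Polynomial.X ^ (m - 1 - (i : ℕ)) with hPdef
  set Q : R[X] := Polynomial.X ^ n + ∑ j : Fin n, Polynomial.C (b j) * Polynomial.X ^ (n - 1 - (j : ℕ)) with hQdef
  -- the coefficient of `Polynomial.X^n` in `Q` is 1
  have hQcoeff : Q.coeff n = 1 := by
    rw [hQdef, Polynomial.coeff_add, Polynomial.coeff_X_pow, if_pos rfl,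
      Polynomial.finset_sum_coeff, Finset.sum_eq_zero, add_zero]
    intro j _
    rw [Polynomial.coeff_C_mul, Polynomial.coeff_X_pow, if_neg (by omega), mul_zero]
  by_cases hα0 : α = 0
  · -- then `Polynomial.C h * Q = 0`, hence `h = 0`
    have h0 : Polynomial.C h * Q = 0 := by rw [← hαeq, hα0, zero_mul]
    have : h = 0 := by
      have := congrArg (fun p : R[X] => p.coeff n) h0
      simpa [Polynomial.coeff_C_mul, hQcoeff] using this
    intro i _
    simp [this]
  · -- `P` is monic of degree `m`
    have hsumdeg : ∀ (N : ℕ) (c : Fin N → R), 1 ≤ N →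
        (∑ i : Fin N, Polynomial.C (c i) * Polynomial.X ^ (N - 1 - (i : ℕ)) : R[X]).degree < (N : ℕ) := by
      intro N c hN
      apply lt_of_le_of_lt (Polynomial.degree_sum_le _ _)
      rw [Finset.sup_lt_iff (by exact_mod_cast WithBot.bot_lt_coe N)]
      intro i _
      have hiN : (i : ℕ) < N := i.isLt
      apply lt_of_le_of_lt (Polynomial.degree_C_mul_X_pow_le _ _)
      exact_mod_cast (show N - 1 - (i : ℕ) < N by omega)
    have hPmon : P.Monic := by
      rcases Nat.eq_zero_or_pos m with hm | hm
      · rw [hPdef]; subst hm; simp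
      · exact Polynomial.monic_X_pow_add (hsumdeg m a hm)
    have hPnat : P.natDegree = m := by
      rcases Nat.eq_zero_or_pos m with hm | hm
      · rw [hPdef]; subst hm; simp
      · apply Polynomial.natDegree_eq_of_degree_eq_some
        rw [hPdef, Polynomial.degree_add_eq_left_of_degree_lt
          (by rw [Polynomial.degree_X_pow]; exact hsumdeg m a hm)]
        exact Polynomial.degree_X_pow m
    have hQnat : Q.natDegree ≤ n := by
      rcases Nat.eq_zero_or_pos n with hn | hn
      · rw [hQdef]; subst hn; simp
      · apply Polynomial.natDegree_le_iff_degree_le.mpr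
        rw [hQdef]
        apply le_trans (Polynomial.degree_add_le _ _)
        rw [Polynomial.degree_X_pow]
        exact max_le le_rfl (le_of_lt (hsumdeg n b hn))
    -- degree bound: `α.natDegree + m ≤ n`
    have hdeg : α.natDegree + m ≤ n := by
      have h1 : (α * P).natDegree = α.natDegree + m := by
        rw [mul_comm, hPmon.natDegree_mul' hα0, hPnat, add_comm]
      have h2 : (Polynomial.C h * Q).natDegree ≤ n :=
        le_trans (Polynomial.natDegree_C_mul_le _ _) hQnat
      rw [← h1, hαeq]; exact h2
    have hmn : m ≤ n := le_trans (Nat.le_add_left m α.natDegree) hdeg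
    set k : ℕ := n - m with hkdef
    have hkm : k + m = n := by omega
    -- reflect the polynomial identity
    have hrefl : α.reflect k * P.reflect m = Polynomial.C h * Q.reflect n := by
      rw [← Polynomial.reflect_mul α P (by omega) (le_of_eq hPnat), hαeq, hkm,
        Polynomial.reflect_C_mul]
    -- compute the reflections of `P` and `Q`
    have hPrefl : P.reflect m = 1 + ∑ i : Fin m, Polynomial.C (a i) * Polynomial.X ^ ((i : ℕ) + 1) := by
      rw [hPdef, Polynomial.reflect_add, Polynomial.reflect_monomial,
        Polynomial.revAt_le le_rfl, Nat.sub_self, pow_zero, reflect_sum']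
      congr 1
      apply Finset.sum_congr rfl
      intro i _
      rw [Polynomial.reflect_C_mul_X_pow, Polynomial.revAt_le (by omega)]
      congr 2
      omega
    have hQrefl : Q.reflect n = 1 + ∑ j : Fin n, Polynomial.C (b j) * Polynomial.X ^ ((j : ℕ) + 1) := by
      rw [hQdef, Polynomial.reflect_add, Polynomial.reflect_monomial,
        Polynomial.revAt_le le_rfl, Nat.sub_self, pow_zero, reflect_sum']
      congr 1
      apply Finset.sum_congr rfl
      intro j _
      rw [Polynomial.reflect_C_mul_X_pow, Polynomial.revAt_le (by omega)]
      congr 2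
      omega
    -- transport everything to power series
    set Pt : PowerSeries R :=
      1 + ∑ i : Fin m, PowerSeries.C (a i) * PowerSeries.X ^ ((i : ℕ) + 1) with hPtdef
    set Qt : PowerSeries R :=
      1 + ∑ j : Fin n, PowerSeries.C (b j) * PowerSeries.X ^ ((j : ℕ) + 1) with hQtdef
    have hsumcoe : ∀ (N : ℕ) (c : Fin N → R),
        ((∑ i : Fin N, Polynomial.C (c i) * Polynomial.X ^ ((i : ℕ) + 1) : R[X]) : PowerSeries R)
          = ∑ i : Fin N, PowerSeries.C (c i) * PowerSeries.X ^ ((i : ℕ) + 1) := by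
      intro N c
      rw [← Polynomial.coeToPowerSeries.ringHom_apply, map_sum]
      apply Finset.sum_congr rfl
      intro i _
      rw [map_mul, map_pow, Polynomial.coeToPowerSeries.ringHom_apply,
        Polynomial.coeToPowerSeries.ringHom_apply, Polynomial.coe_C, Polynomial.coe_X]
    have hPcoe : ((P.reflect m : R[X]) : PowerSeries R) = Pt := by
      rw [hPrefl, hPtdef, Polynomial.coe_add, Polynomial.coe_one, hsumcoe]
    have hQcoe : ((Q.reflect n : R[X]) : PowerSeries R) = Qt := by
      rw [hQrefl, hQtdef, Polynomial.coe_add, Polynomial.coe_one, hsumcoe]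
    have hcoe : ((α.reflect k : R[X]) : PowerSeries R) * Pt = PowerSeries.C h * Qt := by
      rw [← hPcoe, ← hQcoe, ← Polynomial.coe_mul, ← Polynomial.coe_C, ← Polynomial.coe_mul,
        hrefl]
    have hu : IsUnit Pt := by
      rw [PowerSeries.isUnit_iff_constantCoeff]
      have : PowerSeries.constantCoeff Pt = 1 := by
        rw [hPtdef]
        simp
      rw [this]
      exact isUnit_one
    have hAS : ((α.reflect k : R[X]) : PowerSeries R) = PowerSeries.C h * S := by
      apply hu.mul_left_cancel
      rw [mul_comm Pt, hcoe, ← hS, hPtdef]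
      ring
    intro i hi
    have hik : k < i := by omega
    have h1 := congrArg (PowerSeries.coeff i) hAS
    rw [PowerSeries.coeff_C_mul, Polynomial.coeff_coe, Polynomial.coeff_reflect,
      Polynomial.revAt_eq_self_of_lt hik,
      Polynomial.coeff_eq_zero_of_natDegree_lt (by omega)] at h1
    exact h1.symm
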